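/- For m ≥ 0 and d ≥ 1 and each 1 ≤ j < d/2, the expression \sum_{i=0}^{j-1} (-1)^{i+d-j} e_i · (s_{(m-i+j, 1^{d-j})} + s_{(m-i+j+1, 1^{d-j-1})}) equals (-1)^{d-1} s_{(m+2, 2^{j-1}, 1^{d-2j})} + (-1)^{d-1} e_{j-1} · s_{(m+1, 1^{d-j})}, as symmetric functions (with m ≥ 1 assumed so all indexing sequences are partitions). -/

import Mathlib

open MvPolynomial Finset

noncomputable section

/-- The ring of symmetric functions, as the free polynomial ring generated by the
complete homogeneous symmetric functions `h₁, h₂, …` (variable `n` is `h_{n+1}`). -/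
abbrev SymF := MvPolynomial ℕ ℤ

/-- The complete homogeneous symmetric function `h_n`, with `h_n = 0` for `n < 0`. -/
def hh : ℤ → SymF
  | Int.ofNat 0 => 1
  | Int.ofNat (n+1) => X n
  | Int.negSucc _ => 0

/-- The Schur function `s_λ` for `λ = (lam 0, lam 1, …, lam (l-1))`, defined by the
Jacobi–Trudi determinant `det (h_{λ_i - i + j})₁≤i,j≤l`. -/
def schur (l : ℕ) (lam : Fin l → ℕ) : SymF :=
  Matrix.det (Matrix.of fun i j : Fin l => hh ((lam i : ℤ) + (j : ℤ) - (i : ℤ)))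

/-- The elementary symmetric function `e_n = s_{(1^n)}`. -/
def ee (n : ℕ) : SymF := schur n (fun _ => 1)

/-- The skew Schur function `s_{λ/μ}`, via the Jacobi–Trudi determinant
`det (h_{λ_i - μ_j - i + j})`. -/
def skewSchur (l : ℕ) (lam mu : Fin l → ℕ) : SymF :=
  Matrix.det (Matrix.of fun i j : Fin l =>
    hh ((lam i : ℤ) - (mu j : ℤ) + (j : ℤ) - (i : ℤ)))

lemma hh_neg {z : ℤ} (hz : z < 0) : hh z = 0 := by
  match z with
  | Int.ofNat n => exact absurd hz (by simp)
  | Int.negSucc n => rfl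

lemma hh_zero : hh 0 = 1 := rfl

lemma schur_succ (n : ℕ) (lam : Fin (n+1) → ℕ) :
    schur (n+1) lam = ∑ i : Fin (n+1), (-1 : SymF)^(i:ℕ) * hh ((lam i : ℤ) - (i:ℕ)) *
      schur n (fun r => if (r:ℕ) < (i:ℕ) then lam (Fin.castSucc r) + 1 else lam (Fin.succ r)) := by
  rw [schur, Matrix.det_succ_column_zero]
  refine Finset.sum_congr rfl fun i _ => ?_
  have hA : hh ((lam i : ℤ) + ((0 : Fin (n+1)) : ℤ) - (i : ℤ)) = hh ((lam i : ℤ) - (i:ℕ)) := by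
    congr 1
  have hM : (Matrix.of fun i j : Fin (n+1) => hh ((lam i : ℤ) + (j : ℤ) - (i : ℤ))).submatrix i.succAbove Fin.succ
      = Matrix.of (fun r j : Fin n => hh (((if (r:ℕ) < (i:ℕ) then lam (Fin.castSucc r) + 1 else lam (Fin.succ r) : ℕ) : ℤ) + (j : ℤ) - (r : ℤ))) := by
    ext r j
    simp only [Matrix.submatrix_apply, Matrix.of_apply]
    rcases lt_or_ge ((r : ℕ)) (i : ℕ) with h | h
    · rw [Fin.succAbove_of_castSucc_lt _ _ (by simpa [Fin.lt_def] using h), if_pos h]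
      congr 1
      simp only [Fin.val_succ, Fin.coe_castSucc]
      push_cast
      ring
    · rw [Fin.succAbove_of_le_castSucc _ _ (by simpa [Fin.le_def] using h), if_neg (by omega)]
      congr 1
      simp only [Fin.val_succ]
      push_cast
      ring
  rw [hM, schur]
  simp only [Matrix.of_apply]
  rw [hA]

def hk (a k : ℕ) : SymF := schur (k+1) (fun i => if (i : ℕ) = 0 then a else 1)

lemma ee_zero : ee 0 = 1 := by
  rw [ee, schur]
  exact Matrix.det_isEmpty

lemma ee_succ_eq_hk (k : ℕ) : ee (k+1) = hk 1 k := by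
  rw [ee, hk]
  congr 1
  funext i
  simp

lemma hk_zero (a : ℕ) : hk a 0 = hh a := by
  rw [hk, schur, Matrix.det_fin_one]
  simp

lemma L1 (a k : ℕ) : hk a (k+1) = hh a * ee (k+1) - hk (a+1) k := by
  rw [hk, schur_succ, Fin.sum_univ_succ, Fin.sum_univ_succ]
  have tail : ∑ i : Fin k,
      (-1:SymF) ^ (i.succ.succ : Fin (k+2)).val * hh (((if ((i.succ.succ : Fin (k+2)):ℕ) = 0 then a else 1 : ℕ)) - ((i.succ.succ : Fin (k+2)):ℕ) : ℤ) *
        schur (k + 1) (fun r => if (r:ℕ) < ((i.succ.succ : Fin (k+2)):ℕ) then (if ((Fin.castSucc r):ℕ) = 0 then a else 1) + 1 else if ((Fin.succ r):ℕ) = 0 then a else 1) = 0 := by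
    apply Finset.sum_eq_zero
    intro i _
    have h2 : ((i.succ.succ : Fin (k+2)) : ℕ) = (i:ℕ) + 2 := by simp
    rw [h2, if_neg (by omega), hh_neg (by push_cast; omega)]
    ring
  rw [tail]
  have e0 : (fun r : Fin (k+1) => if (r:ℕ) < ((0 : Fin (k+2)):ℕ) then (if ((Fin.castSucc r):ℕ) = 0 then a else 1) + 1 else if ((Fin.succ r):ℕ) = 0 then a else 1) = (fun _ => 1) := by
    funext r
    simp
  have e1 : (fun r : Fin (k+1) => if (r:ℕ) < ((Fin.succ 0 : Fin (k+2)):ℕ) then (if ((Fin.castSucc r):ℕ) = 0 then a else 1) + 1 else if ((Fin.succ r):ℕ) = 0 then a else 1) = (fun r : Fin (k+1) => if (r:ℕ) = 0 then a+1 else 1) := by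
    funext r
    rcases Nat.eq_zero_or_pos (r:ℕ) with h | h
    · simp [h]
    · have h1 : ¬((r:ℕ) < ((Fin.succ 0 : Fin (k+2)):ℕ)) := by
        simp only [Fin.succ_zero_eq_one, Fin.val_one]
        omega
      have h2 : ¬(((Fin.succ r):ℕ) = 0) := by simp
      rw [if_neg h1, if_neg h2, if_neg (by omega)]
  rw [e0, e1]
  simp only [Fin.val_zero, Fin.succ_zero_eq_one, Fin.val_one, pow_zero, pow_one, if_pos rfl]
  norm_num [hh_zero]
  rw [show schur (k+1) (fun _ : Fin (k+1) => 1) = ee (k+1) from rfl,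
      show schur (k+1) (fun i : Fin (k+1) => if i = 0 then a+1 else 1) = hk (a+1) k from by
        rw [hk]; congr 1; funext i; by_cases h : i = 0 <;> simp [h]]
  ring

lemma L2 (a k : ℕ) : hk a k = ∑ r ∈ Finset.range (k+1), (-1:SymF)^r * hh (a+r : ℕ) * ee (k-r) := by
  induction k generalizing a with
  | zero => simp [hk_zero, ee_zero]
  | succ k ih =>
    rw [L1, ih (a+1), Finset.sum_range_succ' _ (k+1)]
    simp only [pow_zero, Nat.add_zero, Nat.sub_zero, one_mul]
    have : ∀ r, (-1:SymF)^(r+1) * hh (a+(r+1) : ℕ) * ee (k+1-(r+1)) = -((-1)^r * hh (a+1+r : ℕ) * ee (k-r)) := by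
      intro r
    -- signs
      have : a + (r+1) = a+1+r := by omega
      rw [this, pow_succ]
      have : k+1-(r+1) = k - r := by omega
      rw [this]
      ring
    rw [Finset.sum_congr rfl (fun r _ => this r), Finset.sum_neg_distrib]
    abel

def gg (a q b c : ℕ) : SymF :=
  schur (b+c+2) (fun i => if (i:ℕ) = 0 then a else if (i:ℕ) = 1 then q else if (i:ℕ) ≤ b+1 then 2 else 1)

lemma NR0 (a q c : ℕ) : gg a (q+1) 0 c = hh a * hk (q+1) c - hh q * hk (a+1) c := by
  rw [gg, show 0+c+2 = (c+1)+1 from by omega, schur_succ, Fin.sum_univ_succ, Fin.sum_univ_succ]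
  have tail : ∀ i : Fin c, (-1:SymF) ^ ((i.succ.succ : Fin (c+2)):ℕ) *
      hh ((((if ((i.succ.succ : Fin (c+2)):ℕ) = 0 then a else if ((i.succ.succ : Fin (c+2)):ℕ) = 1 then q+1 else if ((i.succ.succ : Fin (c+2)):ℕ) ≤ 0+1 then 2 else 1) : ℕ) : ℤ) - ((i.succ.succ : Fin (c+2)):ℕ)) *
      schur (c+1) (fun r => if (r:ℕ) < ((i.succ.succ : Fin (c+2)):ℕ) then (if ((Fin.castSucc r):ℕ) = 0 then a else if ((Fin.castSucc r):ℕ) = 1 then q+1 else if ((Fin.castSucc r):ℕ) ≤ 0+1 then 2 else 1) + 1 else if ((Fin.succ r):ℕ) = 0 then a else if ((Fin.succ r):ℕ) = 1 then q+1 else if ((Fin.succ r):ℕ) ≤ 0+1 then 2 else 1) = 0 := by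
    intro i
    have h2 : ((i.succ.succ : Fin (c+2)) : ℕ) = (i:ℕ) + 2 := by simp
    rw [h2, if_neg (by omega), if_neg (by omega), if_neg (by omega), hh_neg (by push_cast; omega)]
    ring
  rw [Finset.sum_congr rfl (fun i _ => tail i), Finset.sum_const_zero]
  have e0 : (fun r : Fin (c+1) => if (r:ℕ) < ((0 : Fin (c+2)):ℕ) then (if ((Fin.castSucc r):ℕ) = 0 then a else if ((Fin.castSucc r):ℕ) = 1 then q+1 else if ((Fin.castSucc r):ℕ) ≤ 0+1 then 2 else 1) + 1 else if ((Fin.succ r):ℕ) = 0 then a else if ((Fin.succ r):ℕ) = 1 then q+1 else if ((Fin.succ r):ℕ) ≤ 0+1 then 2 else 1)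
      = (fun r : Fin (c+1) => if (r:ℕ) = 0 then q+1 else 1) := by
    funext r
    simp only [Fin.val_succ, Fin.coe_castSucc, Fin.val_zero]
    split_ifs <;> (try contradiction) <;> omega
  have e1 : (fun r : Fin (c+1) => if (r:ℕ) < ((Fin.succ 0 : Fin (c+2)):ℕ) then (if ((Fin.castSucc r):ℕ) = 0 then a else if ((Fin.castSucc r):ℕ) = 1 then q+1 else if ((Fin.castSucc r):ℕ) ≤ 0+1 then 2 else 1) + 1 else if ((Fin.succ r):ℕ) = 0 then a else if ((Fin.succ r):ℕ) = 1 then q+1 else if ((Fin.succ r):ℕ) ≤ 0+1 then 2 else 1)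
      = (fun r : Fin (c+1) => if (r:ℕ) = 0 then a+1 else 1) := by
    funext r
    simp only [Fin.val_succ, Fin.coe_castSucc, Fin.val_zero, Fin.succ_zero_eq_one, Fin.val_one]
    split_ifs <;> (try contradiction) <;> omega
  rw [e0, e1]
  have v0 : hh ((((if ((0 : Fin (c+2)):ℕ) = 0 then a else if ((0 : Fin (c+2)):ℕ) = 1 then q+1 else if ((0 : Fin (c+2)):ℕ) ≤ 0+1 then 2 else 1) : ℕ) : ℤ) - ((0 : Fin (c+2)):ℕ)) = hh a := by
    norm_num
  have v1 : hh ((((if ((Fin.succ 0 : Fin (c+2)):ℕ) = 0 then a else if ((Fin.succ 0 : Fin (c+2)):ℕ) = 1 then q+1 else if ((Fin.succ 0 : Fin (c+2)):ℕ) ≤ 0+1 then 2 else 1) : ℕ) : ℤ) - ((Fin.succ 0 : Fin (c+2)):ℕ)) = hh q := by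
    have : ((Fin.succ 0 : Fin (c+2)):ℕ) = 1 := by simp
    rw [this]
    norm_num
  rw [v0, v1]
  have s0 : schur (c+1) (fun r : Fin (c+1) => if (r:ℕ) = 0 then q+1 else 1) = hk (q+1) c := rfl
  have s1 : schur (c+1) (fun r : Fin (c+1) => if (r:ℕ) = 0 then a+1 else 1) = hk (a+1) c := rfl
  rw [s0, s1]
  simp only [Fin.val_zero, pow_zero]
  have : ((Fin.succ 0 : Fin (c+2)):ℕ) = 1 := by simp
  rw [this]
  ring

lemma NRb (a q b c : ℕ) : gg a (q+1) (b+1) c = hh a * gg (q+1) 2 b c - hh q * gg (a+1) 2 b c + gg (a+1) (q+2) b c := by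
  rw [gg, show (b+1)+c+2 = (b+c+2)+1 from by omega, schur_succ, Fin.sum_univ_succ, Fin.sum_univ_succ, Fin.sum_univ_succ]
  have tail : ∀ i : Fin (b+c), (-1:SymF) ^ (((i.succ.succ.succ : Fin (b+c+3))):ℕ) * hh (((((if ((i.succ.succ.succ : Fin (b+c+3)):ℕ) = 0 then a else if ((i.succ.succ.succ : Fin (b+c+3)):ℕ) = 1 then q + 1 else if ((i.succ.succ.succ : Fin (b+c+3)):ℕ) ≤ b + 1 + 1 then 2 else 1) : ℕ)) : ℤ) - (((i.succ.succ.succ : Fin (b+c+3))):ℕ)) * schur (b+c+2) (fun r : Fin (b+c+2) => if (r:ℕ) < ((i.succ.succ.succ : Fin (b+c+3)):ℕ) then (if (Fin.castSucc r:ℕ) = 0 then a else if (Fin.castSucc r:ℕ) = 1 then q + 1 else if (Fin.castSucc r:ℕ) ≤ b + 1 + 1 then 2 else 1) + 1 else if (Fin.succ r:ℕ) = 0 then a else if (Fin.succ r:ℕ) = 1 then q + 1 else if (Fin.succ r:ℕ) ≤ b + 1 + 1 then 2 else 1) = 0 := by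
    intro i
    have h3 : (((i.succ.succ.succ : Fin (b+c+3))) : ℕ) = (i:ℕ) + 3 := by simp
    have hv : (if ((i.succ.succ.succ : Fin (b+c+3)):ℕ) = 0 then a else if ((i.succ.succ.succ : Fin (b+c+3)):ℕ) = 1 then q + 1 else if ((i.succ.succ.succ : Fin (b+c+3)):ℕ) ≤ b + 1 + 1 then 2 else 1 : ℕ) ≤ 2 := by
      simp only [Fin.val_succ]
      split_ifs <;> (try contradiction) <;> omega
    rw [hh_neg (by push_cast; omega)]
    ring
  rw [Finset.sum_congr rfl (fun i _ => tail i), Finset.sum_const_zero]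
  have hv1 : (((Fin.succ (0 : Fin (b+c+2)) : Fin (b+c+3))) : ℕ) = 1 := by simp
  have hv2 : (((((0 : Fin (b+c+1)).succ).succ : Fin (b+c+3))) : ℕ) = 2 := by simp
  have e0 : (fun r : Fin (b+c+2) => if (r:ℕ) < ((0 : Fin (b+c+2+1)):ℕ) then (if (Fin.castSucc r:ℕ) = 0 then a else if (Fin.castSucc r:ℕ) = 1 then q + 1 else if (Fin.castSucc r:ℕ) ≤ b + 1 + 1 then 2 else 1) + 1 else if (Fin.succ r:ℕ) = 0 then a else if (Fin.succ r:ℕ) = 1 then q + 1 else if (Fin.succ r:ℕ) ≤ b + 1 + 1 then 2 else 1) = (fun r : Fin (b+c+2) => if (r:ℕ) = 0 then q+1 else if (r:ℕ) = 1 then 2 else if (r:ℕ) ≤ b+1 then 2 else 1) := by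
    funext r
    simp only [Fin.val_succ, Fin.coe_castSucc, Fin.val_zero]
    split_ifs <;> (try contradiction) <;> omega
  have e1 : (fun r : Fin (b+c+2) => if (r:ℕ) < ((Fin.succ (0 : Fin (b+c+2)) : Fin (b+c+3)):ℕ) then (if (Fin.castSucc r:ℕ) = 0 then a else if (Fin.castSucc r:ℕ) = 1 then q + 1 else if (Fin.castSucc r:ℕ) ≤ b + 1 + 1 then 2 else 1) + 1 else if (Fin.succ r:ℕ) = 0 then a else if (Fin.succ r:ℕ) = 1 then q + 1 else if (Fin.succ r:ℕ) ≤ b + 1 + 1 then 2 else 1) = (fun r : Fin (b+c+2) => if (r:ℕ) = 0 then a+1 else if (r:ℕ) = 1 then 2 else if (r:ℕ) ≤ b+1 then 2 else 1) := by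
    funext r
    simp only [Fin.val_succ, Fin.coe_castSucc, Fin.val_zero, hv1]
    split_ifs <;> (try contradiction) <;> omega
  have e2 : (fun r : Fin (b+c+2) => if (r:ℕ) < ((((0 : Fin (b+c+1)).succ).succ : Fin (b+c+3)):ℕ) then (if (Fin.castSucc r:ℕ) = 0 then a else if (Fin.castSucc r:ℕ) = 1 then q + 1 else if (Fin.castSucc r:ℕ) ≤ b + 1 + 1 then 2 else 1) + 1 else if (Fin.succ r:ℕ) = 0 then a else if (Fin.succ r:ℕ) = 1 then q + 1 else if (Fin.succ r:ℕ) ≤ b + 1 + 1 then 2 else 1) = (fun r : Fin (b+c+2) => if (r:ℕ) = 0 then a+1 else if (r:ℕ) = 1 then q+2 else if (r:ℕ) ≤ b+1 then 2 else 1) := by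
    funext r
    simp only [Fin.val_succ, Fin.coe_castSucc, Fin.val_zero, hv2]
    split_ifs <;> (try contradiction) <;> omega
  rw [e0, e1, e2]
  have w0 : hh ((((if ((0 : Fin (b+c+2+1)):ℕ) = 0 then a else if ((0 : Fin (b+c+2+1)):ℕ) = 1 then q + 1 else if ((0 : Fin (b+c+2+1)):ℕ) ≤ b + 1 + 1 then 2 else 1) : ℕ) : ℤ) - (((0 : Fin (b+c+2+1))):ℕ)) = hh a := by norm_num
  have w1 : hh ((((if ((Fin.succ (0 : Fin (b+c+2)) : Fin (b+c+3)):ℕ) = 0 then a else if ((Fin.succ (0 : Fin (b+c+2)) : Fin (b+c+3)):ℕ) = 1 then q + 1 else if ((Fin.succ (0 : Fin (b+c+2)) : Fin (b+c+3)):ℕ) ≤ b + 1 + 1 then 2 else 1) : ℕ) : ℤ) - (((Fin.succ (0 : Fin (b+c+2)) : Fin (b+c+3))):ℕ)) = hh q := by rw [hv1]; norm_num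
  have w2 : hh ((((if ((((0 : Fin (b+c+1)).succ).succ : Fin (b+c+3)):ℕ) = 0 then a else if ((((0 : Fin (b+c+1)).succ).succ : Fin (b+c+3)):ℕ) = 1 then q + 1 else if ((((0 : Fin (b+c+1)).succ).succ : Fin (b+c+3)):ℕ) ≤ b + 1 + 1 then 2 else 1) : ℕ) : ℤ) - (((((0 : Fin (b+c+1)).succ).succ : Fin (b+c+3))):ℕ)) = 1 := by
    rw [hv2]
    rw [show (if (2:ℕ) = 0 then a else if (2:ℕ) = 1 then q + 1 else if (2:ℕ) ≤ b + 1 + 1 then 2 else 1 : ℕ) = 2 from by split_ifs <;> (try contradiction) <;> omega]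
    norm_num [hh_zero]
  rw [w0, w1, w2]
  rw [show schur (b+c+2) (fun r : Fin (b+c+2) => if (r:ℕ) = 0 then q+1 else if (r:ℕ) = 1 then 2 else if (r:ℕ) ≤ b+1 then 2 else 1) = gg (q+1) 2 b c from rfl,
      show schur (b+c+2) (fun r : Fin (b+c+2) => if (r:ℕ) = 0 then a+1 else if (r:ℕ) = 1 then 2 else if (r:ℕ) ≤ b+1 then 2 else 1) = gg (a+1) 2 b c from rfl,
      show schur (b+c+2) (fun r : Fin (b+c+2) => if (r:ℕ) = 0 then a+1 else if (r:ℕ) = 1 then q+2 else if (r:ℕ) ≤ b+1 then 2 else 1) = gg (a+1) (q+2) b c from rfl]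
  simp only [Fin.val_zero, pow_zero, hv1, hv2, pow_one]
  ring

lemma C (b a q c : ℕ) : gg a (q+2) b c = hk a (b+c+1) * hk (q+1) b - hk a b * hk (q+1) (b+c+1) := by
  induction b generalizing a q with
  | zero =>
    rw [show (q+2) = (q+1)+1 from rfl, NR0]
    rw [show (0:ℕ)+c+1 = c+1 from by omega, hk_zero, hk_zero]
    rw [L1 a c, L1 (q+1) c]
    ring
  | succ b ih =>
    rw [show (q+2) = (q+1)+1 from rfl, NRb]
    rw [show (2:ℕ) = 0+2 from rfl] 
    rw [ih (q+1+1) 0, ih (a+1) 0, ih (a+1) (q+1)]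
    rw [show (0:ℕ)+1 = 1 from rfl]
    rw [show b+1+c+1 = (b+c+1)+1 from by omega]
    rw [L1 a (b+c+1), L1 (q+1) (b+c+1), L1 a b, L1 (q+1) b]
    rw [ee_succ_eq_hk (b+c+1), ee_succ_eq_hk b]
    ring

lemma sgn (x y n : ℕ) (h : x + y = n) : (-1:SymF)^x = (-1)^n * (-1)^y := by
  have h2 : ((-1:SymF)^y) * ((-1)^y) = 1 := by
    rw [← pow_add]
    exact Even.neg_one_pow ⟨y, rfl⟩
  rw [← h, pow_add, mul_assoc, h2, mul_one]

lemma key (m b c : ℕ) :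
    ∑ i ∈ Finset.range (b+1), (-1:SymF)^(i + (b+c+1+1)) * ee i *
      (hk (m+(b+1)-i) (b+c+1+1) + hk (m+(b+1)-i+1) (b+c+1))
    = (-1:SymF)^(2*b+c+2) * (hk (m+1) b * ee (b+c+1+1)) := by
  rw [L2 (m+1) b, ← Finset.sum_range_reflect, Finset.sum_mul, Finset.mul_sum]
  refine Finset.sum_congr rfl fun r hr => ?_
  rw [Finset.mem_range] at hr
  rw [show b+1-1-r = b - r from by omega, show m+(b+1)-(b-r) = m+1+r from by omega,
      L1 (m+1+r) (b+c+1), sgn (b-r + (b+c+1+1)) r (2*b+c+2) (by omega)]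
  ring

lemma nearhook (m B c : ℕ) :
    schur (B+1+c+1+1) (fun k => if (k:ℕ) = 0 then m+2 else if (k:ℕ) ≤ B+1 then 2 else 1)
    = hk (m+2) (B+1+c+1) * ee (B+1) - hk (m+2) B * ee (B+1+c+1+1) := by
  have h1 : schur (B+1+c+1+1) (fun k => if (k:ℕ) = 0 then m+2 else if (k:ℕ) ≤ B+1 then 2 else 1)
      = gg (m+2) (0+2) B (c+1) := by
    rw [gg, show B+(c+1)+2 = B+1+c+1+1 from by omega]
    congr 1
    funext k
    split_ifs <;> (try contradiction) <;> omega
  rw [h1, C B (m+2) 0 (c+1), show B+(c+1)+1 = B+1+c+1 from by omega, show (0:ℕ)+1 = 1 from rfl,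
      ← ee_succ_eq_hk B, ← ee_succ_eq_hk (B+1+c+1)]


/-- For `m ≥ 1`, `d ≥ 1`, `1 ≤ j < d/2`:
`∑_{i=0}^{j-1} (-1)^{i+d-j} e_i (s_{(m-i+j,1^{d-j})} + s_{(m-i+j+1,1^{d-j-1})})
  = (-1)^{d-1} s_{(m+2,2^{j-1},1^{d-2j})} + (-1)^{d-1} e_{j-1} s_{(m+1,1^{d-j})}`. -/
theorem stmt18 (m d j : ℕ) (hm : 1 ≤ m) (hd : 1 ≤ d) (hj : 1 ≤ j) (hjd : 2 * j < d) :
    ∑ i ∈ Finset.range j, (-1 : SymF)^(i + d - j) * ee i *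
        (schur (d - j + 1) (fun k => if (k : ℕ) = 0 then m + j - i else 1)
          + schur (d - j) (fun k => if (k : ℕ) = 0 then m + j - i + 1 else 1))
    = (-1 : SymF)^(d-1) *
        schur (d - j)
          (fun k => if (k : ℕ) = 0 then m + 2 else if (k : ℕ) ≤ j - 1 then 2 else 1)
      + (-1 : SymF)^(d-1) * ee (j-1) *
          schur (d - j + 1) (fun k => if (k : ℕ) = 0 then m + 1 else 1) := by
  obtain ⟨b, rfl⟩ : ∃ b, j = b + 1 := ⟨j - 1, by omega⟩
  obtain ⟨c, rfl⟩ : ∃ c, d = 2*(b+1)+c+1 := ⟨d - 2*(b+1) - 1, by omega⟩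
  simp only [show (b+1)-1 = b from by omega,
    show 2*(b+1)+c+1-1 = 2*b+c+2 from by omega,
    show ∀ i : ℕ, i + (2*(b+1)+c+1) - (b+1) = i + (b+c+1+1) from fun i => by omega]
  rw [show 2*(b+1)+c+1 - (b+1) = b+c+1+1 from by omega]
  have key' := key m b c
  simp only [hk] at key'
  rw [key']
  have hlast : schur (b+c+1+1+1) (fun k : Fin (b+c+1+1+1) => if (k:ℕ) = 0 then m+1 else 1)
      = hk (m+1) (b+c+1+1) := rfl
  rw [hlast]
  rcases b with _ | B
  · -- j = 1 case
    have hnear : schur (0+c+1+1) (fun k : Fin (0+c+1+1) => if (k:ℕ) = 0 then m+2 else if (k:ℕ) ≤ 0 then 2 else 1)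
        = hk (m+2) (0+c+1) := by
      rw [hk]
      congr 1
      funext k
      split_ifs <;> (try contradiction) <;> omega
    rw [hnear, L1 (m+1) (0+c+1), ee_zero,
      show (schur (0+1) fun i : Fin (0+1) => if (i:ℕ) = 0 then m+1 else 1) = hh ((m+1 : ℕ) : ℤ) from hk_zero (m+1),
      show m+1+1 = m+2 from rfl]
    ring
  · rw [nearhook m B c, L1 (m+1) (B+1+c+1),
      show (schur (B+1+1) fun i : Fin (B+1+1) => if (i:ℕ) = 0 then m+1 else 1) = hk (m+1) (B+1) from rfl,
      L1 (m+1) B, show m+1+1 = m+2 from rfl]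
    ring
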